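/- Let D be an n-run OofA design on m components with n ≥ 2 such that C_1(D) = 0 and C_2(D) = 0 (in particular, this holds for any order-of-addition orthogonal array of strength 2). Then k_{m2}(D) = n m(m−1)(9m² − 5m + 10) / (144(n−1)). -/
import Mathlib


/-- A run (addition order) on `m` components: position `r` receives component `x r`.
The position map `π_x` is `x.symm`. -/
abbrev Run (m : ℕ) := Equiv.Perm (Fin m)

/-- Kendall tau distance between two runs. -/
def kendall {m : ℕ} (x y : Run m) : ℕ :=
  (Finset.univ.filter fun p : Fin m × Fin m =>
    p.1 < p.2 ∧
      (((x.symm p.1 : ℕ) : ℤ) - ((x.symm p.2 : ℕ) : ℤ)) *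
        (((y.symm p.1 : ℕ) : ℤ) - ((y.symm p.2 : ℕ) : ℤ)) < 0).card

/-- Average pairwise Kendall tau distance of an `n`-run design. -/
noncomputable def kave {m n : ℕ} (D : Fin n → Run m) : ℝ :=
  (∑ p ∈ Finset.univ.filter (fun p : Fin n × Fin n => p.1 < p.2),
      (kendall (D p.1) (D p.2) : ℝ)) / (n.choose 2 : ℝ)

/-- Second moment of the pairwise Kendall tau distances of an `n`-run design. -/
noncomputable def km2 {m n : ℕ} (D : Fin n → Run m) : ℝ :=
  (∑ p ∈ Finset.univ.filter (fun p : Fin n × Fin n => p.1 < p.2),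
      (kendall (D p.1) (D p.2) : ℝ) ^ 2) / (n.choose 2 : ℝ)

/-- The PWO factor `z_ab(x)` as a real number. -/
def zab {m : ℕ} (x : Run m) (p : Fin m × Fin m) : ℝ :=
  if x.symm p.1 < x.symm p.2 then 1 else -1

/-- The set `Q` of ordered component pairs `(a,b)` with `a < b`. -/
def pairsQ (m : ℕ) : Finset (Fin m × Fin m) :=
  Finset.univ.filter fun p => p.1 < p.2

/-- The `J`-characteristic `J_W(D) = Σ_{x ∈ D} Π_{(a,b) ∈ W} z_ab(x)`. -/
noncomputable def Jchar {m : ℕ} {ι : Type} [Fintype ι] (D : ι → Run m)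
    (W : Finset (Fin m × Fin m)) : ℝ :=
  ∑ i, ∏ p ∈ W, zab (D i) p

/-- The centralized generalized wordlength pattern
`C_a(D) = Σ_{W ⊆ Q, |W| = a} (J_W(D)/n − J_W(D_full)/m!)²`,
where the full design consists of all `m!` permutations. -/
noncomputable def Cwlp {m n : ℕ} (D : Fin n → Run m) (a : ℕ) : ℝ :=
  ∑ W ∈ (pairsQ m).powersetCard a,
    (Jchar D W / (n : ℝ) - Jchar (fun σ : Run m => σ) W / (Nat.factorial m : ℝ)) ^ 2

section Aux
open Finset
variable {m : ℕ}

lemma zab_sq (x : Run m) (p : Fin m × Fin m) : zab x p * zab x p = 1 := by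
  unfold zab; split <;> norm_num

lemma zab_swap (x : Run m) {a b : Fin m} (h : a ≠ b) : zab x (b, a) = -zab x (a, b) := by
  unfold zab
  have hne : x.symm a ≠ x.symm b := fun hh => h (x.symm.injective hh)
  rcases lt_or_gt_of_ne hne with h1 | h1
  · rw [if_neg (asymm h1), if_pos h1]
  · rw [if_pos h1, if_neg (asymm h1)]; norm_num

lemma zab_relabel (π x : Run m) (a b : Fin m) :
    zab (π⁻¹ * x) (a, b) = zab x (π a, π b) := by
  unfold zab
  have h : ∀ c, (π⁻¹ * x).symm c = x.symm (π c) := by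
    intro c
    rw [← Equiv.Perm.inv_def, mul_inv_rev, inv_inv, Equiv.Perm.mul_apply, Equiv.Perm.inv_def]
  rw [h, h]

lemma sum_perm_reindex (π : Run m) (f : Run m → ℝ) :
    ∑ σ : Run m, f (π * σ) = ∑ σ : Run m, f σ :=
  Equiv.sum_comp (Equiv.mulLeft π) f

lemma full_single {a b : Fin m} (h : a ≠ b) : ∑ σ : Run m, zab σ (a, b) = 0 := by
  have key : ∑ σ : Run m, zab σ (a, b) = ∑ σ : Run m, zab σ (b, a) := by
    rw [← sum_perm_reindex ((Equiv.swap a b)⁻¹) (fun σ => zab σ (b, a))]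
    refine Finset.sum_congr rfl fun σ _ => ?_
    rw [zab_relabel]
    simp [Equiv.swap_apply_left, Equiv.swap_apply_right]
  have h2 : ∑ σ : Run m, zab σ (b, a) = -∑ σ : Run m, zab σ (a, b) := by
    rw [← Finset.sum_neg_distrib]
    exact Finset.sum_congr rfl fun σ _ => zab_swap σ h
  linarith [key, h2]

lemma full_disjoint {a b c d : Fin m} (hab : a ≠ b) (hca : c ≠ a) (hcb : c ≠ b)
    (hda : d ≠ a) (hdb : d ≠ b) :
    ∑ σ : Run m, zab σ (a, b) * zab σ (c, d) = 0 := by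
  have key : ∑ σ : Run m, zab σ (a, b) * zab σ (c, d)
      = ∑ σ : Run m, zab σ (b, a) * zab σ (c, d) := by
    rw [← sum_perm_reindex ((Equiv.swap a b)⁻¹) (fun σ => zab σ (b, a) * zab σ (c, d))]
    refine Finset.sum_congr rfl fun σ _ => ?_
    rw [zab_relabel, zab_relabel]
    simp [Equiv.swap_apply_left, Equiv.swap_apply_right,
      Equiv.swap_apply_of_ne_of_ne hca hcb, Equiv.swap_apply_of_ne_of_ne hda hdb]
  have h3 : ∑ σ : Run m, zab σ (b, a) * zab σ (c, d)
      = -∑ σ : Run m, zab σ (a, b) * zab σ (c, d) := by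
    rw [← Finset.sum_neg_distrib]
    refine Finset.sum_congr rfl fun σ _ => ?_
    rw [zab_swap σ hab]; ring
  linarith [key, h3]

end Aux
section Aux2
open Finset
variable {m : ℕ}

lemma tri_identity (x : Run m) {a b c : Fin m} (hab : a ≠ b) (hac : a ≠ c) (hbc : b ≠ c) :
    zab x (a, b) * zab x (a, c) - zab x (a, b) * zab x (b, c)
      + zab x (a, c) * zab x (b, c) = 1 := by
  unfold zab
  simp only [Fin.lt_def]
  split_ifs <;> first | ring1 | (exfalso; linarith)

lemma E_relabel (π : Run m) (a b c : Fin m) :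
    ∑ σ : Run m, zab σ (π a, π b) * zab σ (π a, π c)
      = ∑ σ : Run m, zab σ (a, b) * zab σ (a, c) := by
  conv_rhs => rw [← sum_perm_reindex π⁻¹ (fun σ => zab σ (a, b) * zab σ (a, c))]
  refine Finset.sum_congr rfl fun σ _ => ?_
  rw [zab_relabel, zab_relabel]

lemma E_val {a b c : Fin m} (hab : a ≠ b) (hac : a ≠ c) (hbc : b ≠ c) :
    ∑ σ : Run m, zab σ (a, b) * zab σ (a, c) = (m.factorial : ℝ) / 3 := by
  set E := ∑ σ : Run m, zab σ (a, b) * zab σ (a, c) with hE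
  have he2 : ∑ σ : Run m, zab σ (a, b) * zab σ (b, c) = -E := by
    have h1 : ∑ σ : Run m, zab σ (b, a) * zab σ (b, c) = E := by
      have := E_relabel (Equiv.swap a b) a b c
      simpa [Equiv.swap_apply_left, Equiv.swap_apply_right,
        Equiv.swap_apply_of_ne_of_ne (Ne.symm hac) (Ne.symm hbc)] using this
    calc ∑ σ : Run m, zab σ (a, b) * zab σ (b, c)
        = ∑ σ : Run m, -(zab σ (b, a) * zab σ (b, c)) := by
          refine Finset.sum_congr rfl fun σ _ => ?_
          rw [zab_swap σ hab]; ring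
      _ = -E := by rw [Finset.sum_neg_distrib, h1]
  have he3 : ∑ σ : Run m, zab σ (a, c) * zab σ (b, c) = E := by
    have h1 : ∑ σ : Run m, zab σ (c, a) * zab σ (c, b) = E := by
      have := E_relabel (Equiv.swap a b * Equiv.swap a c) a b c
      have ha : (Equiv.swap a b * Equiv.swap a c) a = c := by
        simp [Equiv.Perm.mul_apply, Equiv.swap_apply_left,
          Equiv.swap_apply_of_ne_of_ne (Ne.symm hac) (Ne.symm hbc)]
      have hb : (Equiv.swap a b * Equiv.swap a c) b = a := by
        simp [Equiv.Perm.mul_apply, Equiv.swap_apply_right,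
          Equiv.swap_apply_of_ne_of_ne (Ne.symm hab) hbc]
      have hc : (Equiv.swap a b * Equiv.swap a c) c = b := by
        simp [Equiv.Perm.mul_apply, Equiv.swap_apply_right, Equiv.swap_apply_left]
      rwa [ha, hb, hc] at this
    calc ∑ σ : Run m, zab σ (a, c) * zab σ (b, c)
        = ∑ σ : Run m, zab σ (c, a) * zab σ (c, b) := by
          refine Finset.sum_congr rfl fun σ _ => ?_
          rw [zab_swap σ hac, zab_swap σ hbc]; ring
      _ = E := h1
  have hsum : E - (∑ σ : Run m, zab σ (a, b) * zab σ (b, c))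
      + (∑ σ : Run m, zab σ (a, c) * zab σ (b, c)) = (m.factorial : ℝ) := by
    rw [hE, ← Finset.sum_sub_distrib, ← Finset.sum_add_distrib,
      Finset.sum_congr rfl fun σ _ => tri_identity σ hab hac hbc]
    simp [Finset.card_univ, Fintype.card_perm, Fintype.card_fin]
  rw [he2, he3] at hsum
  linarith [hsum]

end Aux2
section Aux3
open Finset

lemma sum_pairs {α : Type*} [Fintype α] [LinearOrder α] (h : α → α → ℝ)
    (hsym : ∀ a b, h a b = h b a) :
    2 * ∑ p ∈ Finset.univ.filter (fun p : α × α => p.1 < p.2), h p.1 p.2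
      + ∑ a, h a a = ∑ a, ∑ b, h a b := by
  classical
  have h0 : ∑ a, ∑ b, h a b = ∑ p : α × α, h p.1 p.2 := by
    rw [Fintype.sum_prod_type]
  have hsplit : ∑ p : α × α, h p.1 p.2
      = ∑ p ∈ Finset.univ.filter (fun p : α × α => p.1 < p.2), h p.1 p.2
        + ∑ p ∈ Finset.univ.filter (fun p : α × α => ¬ p.1 < p.2), h p.1 p.2 :=
    (Finset.sum_filter_add_sum_filter_not _ _ _).symm
  have hsplit2 : ∑ p ∈ Finset.univ.filter (fun p : α × α => ¬ p.1 < p.2), h p.1 p.2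
      = ∑ p ∈ (Finset.univ.filter (fun p : α × α => ¬ p.1 < p.2)).filter
          (fun p => p.2 < p.1), h p.1 p.2
        + ∑ p ∈ (Finset.univ.filter (fun p : α × α => ¬ p.1 < p.2)).filter
          (fun p => ¬ p.2 < p.1), h p.1 p.2 :=
    (Finset.sum_filter_add_sum_filter_not _ _ _).symm
  have hgt : (Finset.univ.filter (fun p : α × α => ¬ p.1 < p.2)).filter
      (fun p => p.2 < p.1) = Finset.univ.filter (fun p : α × α => p.2 < p.1) := by
    ext p
    simp only [Finset.mem_filter, Finset.mem_univ, true_and, not_lt]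
    exact ⟨fun h => h.2, fun h => ⟨h.le, h⟩⟩
  have hdiag : (Finset.univ.filter (fun p : α × α => ¬ p.1 < p.2)).filter
      (fun p => ¬ p.2 < p.1) = Finset.univ.filter (fun p : α × α => p.1 = p.2) := by
    ext p
    simp only [Finset.mem_filter, Finset.mem_univ, true_and, not_lt]
    exact ⟨fun h => le_antisymm h.2 h.1, fun h => ⟨h.ge, h.le⟩⟩
  have hgtsum : ∑ p ∈ Finset.univ.filter (fun p : α × α => p.2 < p.1), h p.1 p.2
      = ∑ p ∈ Finset.univ.filter (fun p : α × α => p.1 < p.2), h p.1 p.2 := by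
    refine Finset.sum_equiv (Equiv.prodComm α α) ?_ ?_
    · intro p; simp [Equiv.prodComm]
    · intro p _; exact hsym p.1 p.2
  have hdiagsum : ∑ p ∈ Finset.univ.filter (fun p : α × α => p.1 = p.2), h p.1 p.2
      = ∑ a, h a a := by
    refine Finset.sum_nbij' (fun p => p.1) (fun a => (a, a)) ?_ ?_ ?_ ?_ ?_
    · intro p _; exact Finset.mem_univ _
    · intro a _; simp
    · intro p hp
      simp only [Finset.mem_filter] at hp
      exact Prod.ext rfl hp.2
    · intro a _; rfl
    · intro p hp
      simp only [Finset.mem_filter] at hp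
      rw [← hp.2]
  rw [h0, hsplit, hsplit2, hgt, hdiag, hgtsum, hdiagsum]; ring

lemma card_pairsQ_real (m : ℕ) :
    2 * ∑ p ∈ pairsQ m, (1 : ℝ) + (m : ℝ) = (m : ℝ) * (m : ℝ) := by
  have h := sum_pairs (α := Fin m) (fun _ _ => (1 : ℝ)) (fun _ _ => rfl)
  unfold pairsQ
  simpa using h

lemma kendall_formula {m : ℕ} (x y : Run m) :
    (kendall x y : ℝ)
      = ((∑ p ∈ pairsQ m, (1:ℝ)) - ∑ p ∈ pairsQ m, zab x p * zab y p) / 2 := by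
  classical
  have cast1 : ∀ (u v : Fin m), ((u : ℕ) : ℤ) < ((v : ℕ) : ℤ) ↔ u < v := by
    intro u v; rw [Nat.cast_lt, Fin.lt_def]
  unfold kendall
  rw [Finset.card_filter]
  push_cast
  have step1 : ∑ p : Fin m × Fin m,
      (if p.1 < p.2 ∧
          (((x.symm p.1 : ℕ) : ℤ) - ((x.symm p.2 : ℕ) : ℤ)) *
            (((y.symm p.1 : ℕ) : ℤ) - ((y.symm p.2 : ℕ) : ℤ)) < 0 then (1:ℝ) else 0)
      = ∑ p ∈ pairsQ m,
        (if (((x.symm p.1 : ℕ) : ℤ) - ((x.symm p.2 : ℕ) : ℤ)) *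
            (((y.symm p.1 : ℕ) : ℤ) - ((y.symm p.2 : ℕ) : ℤ)) < 0 then (1:ℝ) else 0) := by
    unfold pairsQ
    rw [Finset.sum_filter]
    refine Finset.sum_congr rfl fun p _ => ?_
    rw [ite_and]
  rw [step1]
  rw [← Finset.sum_sub_distrib, Finset.sum_div]
  refine Finset.sum_congr rfl fun p hp => ?_
  have hlt : p.1 < p.2 := (Finset.mem_filter.1 hp).2
  have hne1 : x.symm p.1 ≠ x.symm p.2 := fun hh => (ne_of_lt hlt) (x.symm.injective hh)
  have hne2 : y.symm p.1 ≠ y.symm p.2 := fun hh => (ne_of_lt hlt) (y.symm.injective hh)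
  unfold zab
  rcases lt_or_gt_of_ne hne1 with h1 | h1 <;> rcases lt_or_gt_of_ne hne2 with h2 | h2
  · rw [if_pos h1, if_pos h2, if_neg]
    · norm_num
    · have a1 := (cast1 _ _).2 h1
      have a2 := (cast1 _ _).2 h2
      have b1 : (0:ℤ) < ((x.symm p.2 : ℕ) : ℤ) - ((x.symm p.1 : ℕ) : ℤ) := by omega
      have b2 : (0:ℤ) < ((y.symm p.2 : ℕ) : ℤ) - ((y.symm p.1 : ℕ) : ℤ) := by omega
      nlinarith
  · rw [if_pos h1, if_neg (not_lt_of_gt h2), if_pos]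
    · norm_num
    · have a1 := (cast1 _ _).2 h1
      have a2 := (cast1 _ _).2 h2
      have b1 : (0:ℤ) < ((x.symm p.2 : ℕ) : ℤ) - ((x.symm p.1 : ℕ) : ℤ) := by omega
      have b2 : (0:ℤ) < ((y.symm p.1 : ℕ) : ℤ) - ((y.symm p.2 : ℕ) : ℤ) := by omega
      nlinarith
  · rw [if_neg (not_lt_of_gt h1), if_pos h2, if_pos]
    · norm_num
    · have a1 := (cast1 _ _).2 h1
      have a2 := (cast1 _ _).2 h2
      have b1 : (0:ℤ) < ((x.symm p.1 : ℕ) : ℤ) - ((x.symm p.2 : ℕ) : ℤ) := by omega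
      have b2 : (0:ℤ) < ((y.symm p.2 : ℕ) : ℤ) - ((y.symm p.1 : ℕ) : ℤ) := by omega
      nlinarith
  · rw [if_neg (not_lt_of_gt h1), if_neg (not_lt_of_gt h2), if_neg]
    · norm_num
    · have a1 := (cast1 _ _).2 h1
      have a2 := (cast1 _ _).2 h2
      have b1 : (0:ℤ) < ((x.symm p.1 : ℕ) : ℤ) - ((x.symm p.2 : ℕ) : ℤ) := by omega
      have b2 : (0:ℤ) < ((y.symm p.1 : ℕ) : ℤ) - ((y.symm p.2 : ℕ) : ℤ) := by omega
      nlinarith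
  end Aux3
section Aux4
open Finset
variable {m n : ℕ}

lemma J1 (D : Fin n → Run m) (hn : n ≠ 0) (hC1 : Cwlp D 1 = 0) {a b : Fin m} (hab : a ≠ b) :
    ∑ i, zab (D i) (a, b) = 0 := by
  have hn' : (n : ℝ) ≠ 0 := Nat.cast_ne_zero.2 hn
  have core : ∀ a b : Fin m, a < b → ∑ i, zab (D i) (a, b) = 0 := by
    intro a b hab'
    unfold Cwlp at hC1
    have hterm := (Finset.sum_eq_zero_iff_of_nonneg (fun W _ => sq_nonneg _)).1 hC1
    have hmem : ({(a, b)} : Finset (Fin m × Fin m)) ∈ (pairsQ m).powersetCard 1 := by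
      rw [Finset.mem_powersetCard]
      exact ⟨Finset.singleton_subset_iff.2 (by simp [pairsQ, hab']), Finset.card_singleton _⟩
    have h1 := (pow_eq_zero_iff two_ne_zero).1 (hterm _ hmem)
    have hfull : Jchar (fun σ : Run m => σ) {(a, b)} = 0 := by
      unfold Jchar
      simp only [Finset.prod_singleton]
      exact full_single (ne_of_lt hab')
    have hD : Jchar D {(a, b)} = ∑ i, zab (D i) (a, b) := by
      unfold Jchar
      simp only [Finset.prod_singleton]
    rw [hfull, hD] at h1
    rw [zero_div, sub_zero, div_eq_zero_iff] at h1
    exact h1.resolve_right hn'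
  rcases lt_or_gt_of_ne hab with h | h
  · exact core a b h
  · have h0 := core b a h
    have e : ∑ i, zab (D i) (a, b) = -∑ i, zab (D i) (b, a) := by
      rw [← Finset.sum_neg_distrib]
      exact Finset.sum_congr rfl fun i _ => by rw [zab_swap _ (ne_of_lt h)]
    rw [e, h0, neg_zero]

set_option maxHeartbeats 2000000 in
lemma J2 (D : Fin n → Run m) (hn : n ≠ 0) (hC2 : Cwlp D 2 = 0) {a b c d : Fin m}
    (hab : a ≠ b) (hcd : c ≠ d) (hone : (c ≠ a ∧ c ≠ b) ∨ (d ≠ a ∧ d ≠ b)) :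
    ∑ i, zab (D i) (a, b) * zab (D i) (c, d)
      = ((n : ℝ) / m.factorial) * ∑ σ : Run m, zab σ (a, b) * zab σ (c, d) := by
  have hn' : (n : ℝ) ≠ 0 := Nat.cast_ne_zero.2 hn
  have hf' : ((m.factorial : ℕ) : ℝ) ≠ 0 := Nat.cast_ne_zero.2 m.factorial_ne_zero
  have core : ∀ a b c d : Fin m, a < b → c < d → ((a, b) : Fin m × Fin m) ≠ (c, d) →
      ∑ i, zab (D i) (a, b) * zab (D i) (c, d)
        = ((n : ℝ) / m.factorial) * ∑ σ : Run m, zab σ (a, b) * zab σ (c, d) := by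
    intro a b c d hab hcd hne
    unfold Cwlp at hC2
    have hterm := (Finset.sum_eq_zero_iff_of_nonneg (fun W _ => sq_nonneg _)).1 hC2
    have hmem : ({(a, b), (c, d)} : Finset (Fin m × Fin m)) ∈ (pairsQ m).powersetCard 2 := by
      rw [Finset.mem_powersetCard]
      constructor
      · rw [Finset.insert_subset_iff, Finset.singleton_subset_iff]
        exact ⟨by simp [pairsQ, hab], by simp [pairsQ, hcd]⟩
      · exact Finset.card_pair hne
    have h1 := (pow_eq_zero_iff two_ne_zero).1 (hterm _ hmem)
    have hD : Jchar D {(a, b), (c, d)} = ∑ i, zab (D i) (a, b) * zab (D i) (c, d) := by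
      unfold Jchar
      exact Finset.sum_congr rfl fun i _ => Finset.prod_pair hne
    have hF : Jchar (fun σ : Run m => σ) {(a, b), (c, d)}
        = ∑ σ : Run m, zab σ (a, b) * zab σ (c, d) := by
      unfold Jchar
      exact Finset.sum_congr rfl fun σ _ => Finset.prod_pair hne
    rw [hD, hF] at h1
    have h2 := sub_eq_zero.1 h1
    rw [div_eq_div_iff hn' hf'] at h2
    rw [div_mul_eq_mul_div, eq_div_iff hf']
    linarith [h2]
  rcases lt_or_gt_of_ne hab with h | h <;> rcases lt_or_gt_of_ne hcd with h' | h'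
  · refine core a b c d h h' ?_
    intro heq; rw [Prod.mk.injEq] at heq; tauto
  · have h0 := core a b d c h h' (by intro heq; rw [Prod.mk.injEq] at heq; tauto)
    have eD : ∑ i, zab (D i) (a, b) * zab (D i) (c, d)
        = -∑ i, zab (D i) (a, b) * zab (D i) (d, c) := by
      rw [← Finset.sum_neg_distrib]
      exact Finset.sum_congr rfl fun i _ => by rw [zab_swap _ (ne_of_lt h')]; ring
    have eF : ∑ σ : Run m, zab σ (a, b) * zab σ (c, d)
        = -∑ σ : Run m, zab σ (a, b) * zab σ (d, c) := by
      rw [← Finset.sum_neg_distrib]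
      exact Finset.sum_congr rfl fun σ _ => by rw [zab_swap _ (ne_of_lt h')]; ring
    rw [eD, eF, h0]; ring
  · have h0 := core b a c d h h' (by intro heq; rw [Prod.mk.injEq] at heq; tauto)
    have eD : ∑ i, zab (D i) (a, b) * zab (D i) (c, d)
        = -∑ i, zab (D i) (b, a) * zab (D i) (c, d) := by
      rw [← Finset.sum_neg_distrib]
      exact Finset.sum_congr rfl fun i _ => by rw [zab_swap _ (ne_of_lt h)]; ring
    have eF : ∑ σ : Run m, zab σ (a, b) * zab σ (c, d)
        = -∑ σ : Run m, zab σ (b, a) * zab σ (c, d) := by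
      rw [← Finset.sum_neg_distrib]
      exact Finset.sum_congr rfl fun σ _ => by rw [zab_swap _ (ne_of_lt h)]; ring
    rw [eD, eF, h0]; ring
  · have h0 := core b a d c h h' (by intro heq; rw [Prod.mk.injEq] at heq; tauto)
    have eD : ∑ i, zab (D i) (a, b) * zab (D i) (c, d)
        = ∑ i, zab (D i) (b, a) * zab (D i) (d, c) := by
      exact Finset.sum_congr rfl fun i _ => by
        rw [zab_swap _ (ne_of_lt h), zab_swap _ (ne_of_lt h')]; ring
    have eF : ∑ σ : Run m, zab σ (a, b) * zab σ (c, d)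
        = ∑ σ : Run m, zab σ (b, a) * zab σ (d, c) := by
      exact Finset.sum_congr rfl fun σ _ => by
        rw [zab_swap _ (ne_of_lt h), zab_swap _ (ne_of_lt h')]; ring
    rw [eD, eF, h0]
end Aux4
section Aux5
open Finset
variable {m n : ℕ}

set_option maxHeartbeats 2000000 in
lemma inner_eval (D : Fin n → Run m) (hm : 2 ≤ m) (hn : n ≠ 0)
    (hC1 : Cwlp D 1 = 0) (hC2 : Cwlp D 2 = 0) {a b : Fin m} (hab : a < b) :
    ∑ q ∈ Finset.univ.filter (fun q : Fin m × Fin m => q.1 < q.2),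
        (∑ i, zab (D i) (a, b) * zab (D i) (q.1, q.2))^2
      = (n:ℝ)^2 + 2*((m:ℝ)-2)*((n:ℝ)^2/9) := by
  classical
  have hab' : a ≠ b := ne_of_lt hab
  have hf' : ((m.factorial : ℕ) : ℝ) ≠ 0 := Nat.cast_ne_zero.2 m.factorial_ne_zero
  have hn' : (n : ℝ) ≠ 0 := Nat.cast_ne_zero.2 hn
  have hzcc : ∀ (x : Run m) (c : Fin m), zab x (c, c) = -1 := fun x c => if_neg (lt_irrefl _)
  have hJ1 : ∑ i, zab (D i) (a, b) = 0 := J1 D hn hC1 hab'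
  have hNn : ∑ i : Fin n, (1:ℝ) = (n:ℝ) := by
    simp [Finset.card_univ]
  -- values
  have vdiag : ∀ c : Fin m, (∑ i, zab (D i) (a, b) * zab (D i) (c, c))^2 = 0 := by
    intro c
    have e : ∑ i, zab (D i) (a, b) * zab (D i) (c, c) = -∑ i, zab (D i) (a, b) := by
      rw [← Finset.sum_neg_distrib]
      exact Finset.sum_congr rfl fun i _ => by rw [hzcc]; ring
    rw [e, hJ1]; norm_num
  have v2 : (∑ i, zab (D i) (a, b) * zab (D i) (a, b))^2 = (n:ℝ)^2 := by
    have e : ∑ i, zab (D i) (a, b) * zab (D i) (a, b) = ∑ i : Fin n, (1:ℝ) :=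
      Finset.sum_congr rfl fun i _ => zab_sq (D i) (a, b)
    rw [e, hNn]
  have v3 : (∑ i, zab (D i) (a, b) * zab (D i) (b, a))^2 = (n:ℝ)^2 := by
    have e : ∑ i, zab (D i) (a, b) * zab (D i) (b, a) = -∑ i : Fin n, (1:ℝ) := by
      rw [← Finset.sum_neg_distrib]
      refine Finset.sum_congr rfl fun i _ => ?_
      rw [zab_swap _ hab']
      have := zab_sq (D i) (a, b); nlinarith [this]
    rw [e, hNn]; ring
  have v4 : ∀ d : Fin m, d ≠ a → d ≠ b →
      (∑ i, zab (D i) (a, b) * zab (D i) (a, d))^2 = (n:ℝ)^2/9 := by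
    intro d hda hdb
    rw [J2 D hn hC2 hab' (Ne.symm hda) (Or.inr ⟨hda, hdb⟩),
      E_val hab' (Ne.symm hda) (Ne.symm hdb)]
    field_simp; ring
  have v5 : ∀ d : Fin m, d ≠ a → d ≠ b →
      (∑ i, zab (D i) (a, b) * zab (D i) (b, d))^2 = (n:ℝ)^2/9 := by
    intro d hda hdb
    rw [J2 D hn hC2 hab' (Ne.symm hdb) (Or.inr ⟨hda, hdb⟩)]
    have e : ∑ σ : Run m, zab σ (a, b) * zab σ (b, d)
        = -∑ σ : Run m, zab σ (b, a) * zab σ (b, d) := by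
      rw [← Finset.sum_neg_distrib]
      exact Finset.sum_congr rfl fun σ _ => by rw [zab_swap _ hab']; ring
    rw [e, E_val (Ne.symm hab') (Ne.symm hdb) (Ne.symm hda)]
    field_simp; ring
  have v6 : ∀ c : Fin m, c ≠ a → c ≠ b →
      (∑ i, zab (D i) (a, b) * zab (D i) (c, a))^2 = (n:ℝ)^2/9 := by
    intro c hca hcb
    rw [J2 D hn hC2 hab' hca (Or.inl ⟨hca, hcb⟩)]
    have e : ∑ σ : Run m, zab σ (a, b) * zab σ (c, a)
        = -∑ σ : Run m, zab σ (a, b) * zab σ (a, c) := by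
      rw [← Finset.sum_neg_distrib]
      exact Finset.sum_congr rfl fun σ _ => by rw [zab_swap _ (Ne.symm hca)]; ring
    rw [e, E_val hab' (Ne.symm hca) (Ne.symm hcb)]
    field_simp; ring
  have v7 : ∀ c : Fin m, c ≠ a → c ≠ b →
      (∑ i, zab (D i) (a, b) * zab (D i) (c, b))^2 = (n:ℝ)^2/9 := by
    intro c hca hcb
    rw [J2 D hn hC2 hab' hcb (Or.inl ⟨hca, hcb⟩)]
    have e : ∑ σ : Run m, zab σ (a, b) * zab σ (c, b)
        = ∑ σ : Run m, zab σ (b, a) * zab σ (b, c) := by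
      refine Finset.sum_congr rfl fun σ _ => ?_
      rw [zab_swap _ (Ne.symm hab'), zab_swap _ (Ne.symm hcb)]; ring
    rw [e, E_val (Ne.symm hab') (Ne.symm hcb) (Ne.symm hca)]
    field_simp; ring
  have v8 : ∀ c d : Fin m, c ≠ d → c ≠ a → c ≠ b → d ≠ a → d ≠ b →
      (∑ i, zab (D i) (a, b) * zab (D i) (c, d))^2 = 0 := by
    intro c d hcd hca hcb hda hdb
    rw [J2 D hn hC2 hab' hcd (Or.inl ⟨hca, hcb⟩),
      full_disjoint hab' hca hcb hda hdb]
    norm_num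
  -- symmetry
  have hsym : ∀ c d : Fin m,
      (∑ i, zab (D i) (a, b) * zab (D i) (c, d))^2
        = (∑ i, zab (D i) (a, b) * zab (D i) (d, c))^2 := by
    intro c d
    rcases eq_or_ne c d with rfl | hcd
    · rfl
    · have e : ∑ i, zab (D i) (a, b) * zab (D i) (d, c)
          = -∑ i, zab (D i) (a, b) * zab (D i) (c, d) := by
        rw [← Finset.sum_neg_distrib]
        exact Finset.sum_congr rfl fun i _ => by rw [zab_swap _ hcd]; ring
      rw [e, neg_sq]
  have key : 2 * ∑ q ∈ Finset.univ.filter (fun q : Fin m × Fin m => q.1 < q.2),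
        (∑ i, zab (D i) (a, b) * zab (D i) (q.1, q.2))^2
      + ∑ c, (∑ i, zab (D i) (a, b) * zab (D i) (c, c))^2
      = ∑ c, ∑ d, (∑ i, zab (D i) (a, b) * zab (D i) (c, d))^2 :=
    sum_pairs (fun c d => (∑ i, zab (D i) (a, b) * zab (D i) (c, d))^2) hsym
  have hdiagsum : ∑ c : Fin m, (∑ i, zab (D i) (a, b) * zab (D i) (c, c))^2 = 0 :=
    Finset.sum_eq_zero fun c _ => vdiag c
  -- row sums
  have hbmem : b ∈ Finset.univ.erase a := Finset.mem_erase.2 ⟨Ne.symm hab', Finset.mem_univ b⟩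
  have hcard2 : (((Finset.univ : Finset (Fin m)).erase a).erase b).card = m - 2 := by
    rw [Finset.card_erase_of_mem hbmem, Finset.card_erase_of_mem (Finset.mem_univ a),
      Finset.card_univ, Fintype.card_fin]
    omega
  have hcast2 : (((m - 2 : ℕ)) : ℝ) = (m:ℝ) - 2 := by
    have : ((2:ℕ):ℝ) = 2 := by norm_num
    rw [Nat.cast_sub hm, this]
  have hga : ∑ d, (∑ i, zab (D i) (a, b) * zab (D i) (a, d))^2
      = (n:ℝ)^2 + ((m:ℝ)-2)*((n:ℝ)^2/9) := by
    rw [← Finset.add_sum_erase _ _ (Finset.mem_univ a),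
      ← Finset.add_sum_erase _ _ hbmem]
    have hrest : ∑ d ∈ ((Finset.univ : Finset (Fin m)).erase a).erase b,
        (∑ i, zab (D i) (a, b) * zab (D i) (a, d))^2 = ((m:ℝ)-2)*((n:ℝ)^2/9) := by
      rw [Finset.sum_congr rfl (fun d hd => by
        have h1 := Finset.mem_erase.1 hd
        have h2 := Finset.mem_erase.1 h1.2
        exact v4 d h2.1 h1.1)]
      rw [Finset.sum_const, hcard2, nsmul_eq_mul, hcast2]
    rw [hrest, vdiag a, v2]; ring
  have hgb : ∑ d, (∑ i, zab (D i) (a, b) * zab (D i) (b, d))^2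
      = (n:ℝ)^2 + ((m:ℝ)-2)*((n:ℝ)^2/9) := by
    rw [← Finset.add_sum_erase _ _ (Finset.mem_univ a),
      ← Finset.add_sum_erase _ _ hbmem]
    have hrest : ∑ d ∈ ((Finset.univ : Finset (Fin m)).erase a).erase b,
        (∑ i, zab (D i) (a, b) * zab (D i) (b, d))^2 = ((m:ℝ)-2)*((n:ℝ)^2/9) := by
      rw [Finset.sum_congr rfl (fun d hd => by
        have h1 := Finset.mem_erase.1 hd
        have h2 := Finset.mem_erase.1 h1.2
        exact v5 d h2.1 h1.1)]
      rw [Finset.sum_const, hcard2, nsmul_eq_mul, hcast2]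
    rw [hrest, vdiag b, v3]; ring
  have hgc : ∀ c : Fin m, c ≠ a → c ≠ b →
      ∑ d, (∑ i, zab (D i) (a, b) * zab (D i) (c, d))^2 = 2*((n:ℝ)^2/9) := by
    intro c hca hcb
    have hcmem : c ∈ ((Finset.univ : Finset (Fin m)).erase a).erase b :=
      Finset.mem_erase.2 ⟨hcb, Finset.mem_erase.2 ⟨hca, Finset.mem_univ c⟩⟩
    rw [← Finset.add_sum_erase _ _ (Finset.mem_univ a),
      ← Finset.add_sum_erase _ _ hbmem,
      ← Finset.add_sum_erase _ _ hcmem]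
    have hrest : ∑ d ∈ ((((Finset.univ : Finset (Fin m)).erase a).erase b).erase c),
        (∑ i, zab (D i) (a, b) * zab (D i) (c, d))^2 = 0 := by
      refine Finset.sum_eq_zero fun d hd => ?_
      have h1 := Finset.mem_erase.1 hd
      have h2 := Finset.mem_erase.1 h1.2
      have h3 := Finset.mem_erase.1 h2.2
      exact v8 c d (Ne.symm h1.1) hca hcb h3.1 h2.1
    rw [hrest, vdiag c, v6 c hca hcb, v7 c hca hcb]; ring
  have htot : ∑ c, ∑ d, (∑ i, zab (D i) (a, b) * zab (D i) (c, d))^2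
      = 2*((n:ℝ)^2 + ((m:ℝ)-2)*((n:ℝ)^2/9)) + ((m:ℝ)-2)*(2*((n:ℝ)^2/9)) := by
    rw [← Finset.add_sum_erase _ _ (Finset.mem_univ a),
      ← Finset.add_sum_erase _ _ hbmem]
    have hrest : ∑ c ∈ ((Finset.univ : Finset (Fin m)).erase a).erase b,
        (∑ d, (∑ i, zab (D i) (a, b) * zab (D i) (c, d))^2)
        = ((m:ℝ)-2)*(2*((n:ℝ)^2/9)) := by
      rw [Finset.sum_congr rfl (fun c hc => by
        have h1 := Finset.mem_erase.1 hc
        have h2 := Finset.mem_erase.1 h1.2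
        exact hgc c h2.1 h1.1)]
      rw [Finset.sum_const, hcard2, nsmul_eq_mul, hcast2]
    rw [hrest, hga, hgb]; ring
  rw [hdiagsum, htot] at key
  linarith [key]

lemma A1_lemma (D : Fin n → Run m) (hn : n ≠ 0) (hC1 : Cwlp D 1 = 0) :
    ∑ i : Fin n, ∑ j : Fin n, (∑ p ∈ pairsQ m, zab (D i) p * zab (D j) p) = 0 := by
  have step : ∀ i, ∑ j : Fin n, ∑ p ∈ pairsQ m, zab (D i) p * zab (D j) p
      = ∑ p ∈ pairsQ m, zab (D i) p * (∑ j, zab (D j) p) := by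
    intro i
    rw [Finset.sum_comm]
    exact Finset.sum_congr rfl fun p _ => (Finset.mul_sum _ _ _).symm
  rw [Finset.sum_congr rfl fun i _ => step i, Finset.sum_comm]
  refine Finset.sum_eq_zero fun p hp => ?_
  have hlt : p.1 < p.2 := (Finset.mem_filter.1 hp).2
  rw [← Finset.sum_mul,
    show (∑ i, zab (D i) p) = 0 from J1 D hn hC1 (ne_of_lt hlt), zero_mul]

lemma A2_lemma (D : Fin n → Run m) (hm : 2 ≤ m) (hn : n ≠ 0)
    (hC1 : Cwlp D 1 = 0) (hC2 : Cwlp D 2 = 0) :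
    ∑ i : Fin n, ∑ j : Fin n, (∑ p ∈ pairsQ m, zab (D i) p * zab (D j) p)^2
      = (∑ _p ∈ pairsQ m, (1:ℝ)) * ((n:ℝ)^2 + 2*((m:ℝ)-2)*((n:ℝ)^2/9)) := by
  have step1 : ∀ i j : Fin n, (∑ p ∈ pairsQ m, zab (D i) p * zab (D j) p)^2
      = ∑ p ∈ pairsQ m, ∑ q ∈ pairsQ m,
          (zab (D i) p * zab (D i) q) * (zab (D j) p * zab (D j) q) := by
    intro i j
    rw [sq, Finset.sum_mul_sum]
    exact Finset.sum_congr rfl fun p _ => Finset.sum_congr rfl fun q _ => by ring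
  have step2 : ∑ i : Fin n, ∑ j : Fin n, (∑ p ∈ pairsQ m, zab (D i) p * zab (D j) p)^2
      = ∑ p ∈ pairsQ m, ∑ q ∈ pairsQ m,
          (∑ i, zab (D i) p * zab (D i) q) * (∑ j, zab (D j) p * zab (D j) q) := by
    rw [Finset.sum_congr rfl fun i _ => Finset.sum_congr rfl fun j _ => step1 i j]
    rw [Finset.sum_congr rfl fun i (_ : i ∈ Finset.univ) => Finset.sum_comm]
    rw [Finset.sum_comm]
    refine Finset.sum_congr rfl fun p _ => ?_
    rw [Finset.sum_congr rfl fun i (_ : i ∈ Finset.univ) => Finset.sum_comm]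
    rw [Finset.sum_comm]
    refine Finset.sum_congr rfl fun q _ => ?_
    rw [Finset.sum_mul_sum]
  rw [step2]
  have step3 : ∀ p ∈ pairsQ m, ∑ q ∈ pairsQ m,
      (∑ i, zab (D i) p * zab (D i) q) * (∑ j, zab (D j) p * zab (D j) q)
      = (n:ℝ)^2 + 2*((m:ℝ)-2)*((n:ℝ)^2/9) := by
    intro p hp
    have hlt : p.1 < p.2 := (Finset.mem_filter.1 hp).2
    have := inner_eval D hm hn hC1 hC2 hlt
    calc ∑ q ∈ pairsQ m,
        (∑ i, zab (D i) p * zab (D i) q) * (∑ j, zab (D j) p * zab (D j) q)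
        = ∑ q ∈ Finset.univ.filter (fun q : Fin m × Fin m => q.1 < q.2),
            (∑ i, zab (D i) (p.1, p.2) * zab (D i) (q.1, q.2))^2 := by
          refine Finset.sum_congr rfl fun q _ => ?_
          rw [← sq]
      _ = (n:ℝ)^2 + 2*((m:ℝ)-2)*((n:ℝ)^2/9) := this
  rw [Finset.sum_congr rfl step3, Finset.sum_const, Finset.sum_const]
  simp only [nsmul_eq_mul, mul_one]
end Aux5

set_option maxHeartbeats 2000000 in
/-- For any design with `C₁(D) = C₂(D) = 0` (in particular, any OofA orthogonal array of
strength 2), the second Kendall tau distance moment attains the full-design benchmark. -/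
theorem stmt9 {m n : ℕ} (hm : 2 ≤ m) (hn : 2 ≤ n) (D : Fin n → Run m)
    (hC1 : Cwlp D 1 = 0) (hC2 : Cwlp D 2 = 0) :
    km2 D = (n : ℝ) * (m : ℝ) * ((m : ℝ) - 1) *
        (9 * (m : ℝ) ^ 2 - 5 * (m : ℝ) + 10) / (144 * ((n : ℝ) - 1)) := by
  classical
  have hn0 : n ≠ 0 := by omega
  have hn' : (n:ℝ) ≠ 0 := Nat.cast_ne_zero.2 hn0
  have hnR : (2:ℝ) ≤ (n:ℝ) := by exact_mod_cast hn
  have hn1 : (n:ℝ) - 1 ≠ 0 := by linarith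
  have hmR : (2:ℝ) ≤ (m:ℝ) := by exact_mod_cast hm
  set Qc : ℝ := ∑ _p ∈ pairsQ m, (1:ℝ) with hQc
  have hQv : Qc = ((m:ℝ) * (m:ℝ) - (m:ℝ)) / 2 := by
    have := card_pairsQ_real m
    rw [← hQc] at this
    linarith
  -- the S function
  have hk : ∀ i j : Fin n, (kendall (D i) (D j) : ℝ)
      = (Qc - ∑ p ∈ pairsQ m, zab (D i) p * zab (D j) p) / 2 :=
    fun i j => kendall_formula (D i) (D j)
  have hnum : ∑ p ∈ Finset.univ.filter (fun p : Fin n × Fin n => p.1 < p.2),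
      (kendall (D p.1) (D p.2) : ℝ)^2
      = ∑ p ∈ Finset.univ.filter (fun p : Fin n × Fin n => p.1 < p.2),
        ((Qc - ∑ q ∈ pairsQ m, zab (D p.1) q * zab (D p.2) q) / 2)^2 :=
    Finset.sum_congr rfl fun p _ => by rw [hk]
  have hsym : ∀ i j : Fin n,
      ((Qc - ∑ q ∈ pairsQ m, zab (D i) q * zab (D j) q) / 2)^2
        = ((Qc - ∑ q ∈ pairsQ m, zab (D j) q * zab (D i) q) / 2)^2 := by
    intro i j
    rw [Finset.sum_congr rfl fun q _ => mul_comm (zab (D i) q) (zab (D j) q)]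
  have key : 2 * ∑ p ∈ Finset.univ.filter (fun p : Fin n × Fin n => p.1 < p.2),
        ((Qc - ∑ q ∈ pairsQ m, zab (D p.1) q * zab (D p.2) q) / 2)^2
      + ∑ i : Fin n, ((Qc - ∑ q ∈ pairsQ m, zab (D i) q * zab (D i) q) / 2)^2
      = ∑ i : Fin n, ∑ j : Fin n,
          ((Qc - ∑ q ∈ pairsQ m, zab (D i) q * zab (D j) q) / 2)^2 :=
    sum_pairs (fun i j => ((Qc - ∑ q ∈ pairsQ m, zab (D i) q * zab (D j) q) / 2)^2) hsym
  have hdiag : ∑ i : Fin n, ((Qc - ∑ q ∈ pairsQ m, zab (D i) q * zab (D i) q) / 2)^2 = 0 := by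
    refine Finset.sum_eq_zero fun i _ => ?_
    have e : ∑ q ∈ pairsQ m, zab (D i) q * zab (D i) q = Qc :=
      Finset.sum_congr rfl fun q _ => zab_sq (D i) q
    rw [e]; ring
  -- expand the double sum
  have per_i : ∀ i : Fin n, ∑ j : Fin n,
      ((Qc - ∑ q ∈ pairsQ m, zab (D i) q * zab (D j) q) / 2)^2
      = ((n:ℝ) * Qc^2 - 2*Qc*(∑ j, ∑ q ∈ pairsQ m, zab (D i) q * zab (D j) q)
          + ∑ j, (∑ q ∈ pairsQ m, zab (D i) q * zab (D j) q)^2) / 4 := by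
    intro i
    rw [Finset.sum_congr rfl (fun j _ => show
      ((Qc - ∑ q ∈ pairsQ m, zab (D i) q * zab (D j) q) / 2)^2
        = (Qc^2 - 2*Qc*(∑ q ∈ pairsQ m, zab (D i) q * zab (D j) q)
            + (∑ q ∈ pairsQ m, zab (D i) q * zab (D j) q)^2) / 4 from by ring)]
    rw [← Finset.sum_div]
    congr 1
    rw [Finset.sum_add_distrib, Finset.sum_sub_distrib, Finset.sum_const,
      Finset.card_univ, Fintype.card_fin, nsmul_eq_mul, ← Finset.mul_sum]
  have htot : ∑ i : Fin n, ∑ j : Fin n,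
      ((Qc - ∑ q ∈ pairsQ m, zab (D i) q * zab (D j) q) / 2)^2
      = ((n:ℝ)*(n:ℝ)*Qc^2
          - 2*Qc*(∑ i : Fin n, ∑ j : Fin n, ∑ q ∈ pairsQ m, zab (D i) q * zab (D j) q)
          + ∑ i : Fin n, ∑ j : Fin n, (∑ q ∈ pairsQ m, zab (D i) q * zab (D j) q)^2) / 4 := by
    rw [Finset.sum_congr rfl fun i _ => per_i i]
    rw [← Finset.sum_div]
    congr 1
    rw [Finset.sum_add_distrib, Finset.sum_sub_distrib, Finset.sum_const,
      Finset.card_univ, Fintype.card_fin, nsmul_eq_mul, ← Finset.mul_sum]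
    ring
  have hA1 := A1_lemma D hn0 hC1
  have hA2 := A2_lemma D hm hn0 hC1 hC2
  rw [← hQc] at hA2
  rw [hA1, hA2] at htot
  -- put it together
  unfold km2
  rw [hnum]
  have hX : ∑ p ∈ Finset.univ.filter (fun p : Fin n × Fin n => p.1 < p.2),
      ((Qc - ∑ q ∈ pairsQ m, zab (D p.1) q * zab (D p.2) q) / 2)^2
      = ((n:ℝ)*(n:ℝ)*Qc^2 - 2*Qc*0
          + Qc * ((n:ℝ)^2 + 2*((m:ℝ)-2)*((n:ℝ)^2/9))) / 4 / 2 := by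
    rw [hdiag, htot] at key
    linarith [key]
  rw [hX, Nat.cast_choose_two (K := ℝ) n, hQv]
  field_simp
  ring
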